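/- For every graph G and every vertex v of G, the game total domination number of G with v predominated satisfies γ_g^t(G|v) ≥ γ_g^t(G) − 2. -/

import Mathlib

open Finset

open scoped Classical

variable {V : Type*} [Fintype V]

/-- The set of neighbors of `v` (the vertices that `v` totally dominates). -/
noncomputable def nbr (G : SimpleGraph V) (v : V) : Finset V :=
  Finset.univ.filter (G.Adj v)

/-- The legal moves, given that the vertices of `D` are already totally dominated:
a vertex is playable iff it totally dominates at least one vertex outside `D`. -/
noncomputable def movesF (G : SimpleGraph V) (D : Finset V) : Finset V :=
  Finset.univ.filter fun v => ¬ nbr G v ⊆ D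

lemma movesF_card (G : SimpleGraph V) (D : Finset V) {v : V} (hv : v ∈ movesF G D) :
    ((univ : Finset V) \ (D ∪ nbr G v)).card < ((univ : Finset V) \ D).card := by
  simp only [movesF, mem_filter] at hv
  obtain ⟨u, hu, hu2⟩ := Finset.not_subset.mp hv.2
  apply Finset.card_lt_card
  constructor
  · exact Finset.sdiff_subset_sdiff le_rfl Finset.subset_union_left
  · intro hsub
    have h1 : u ∈ (univ : Finset V) \ D := by simp [hu2]
    have h2 := hsub h1
    simp only [mem_sdiff, mem_univ, true_and, Finset.mem_union] at h2
    exact h2 (Or.inr hu)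

/-- Optimal number of moves in the total domination game on `G` with the vertices of `D`
already totally dominated; `turn = true` means Dominator (the minimizer) moves next,
`turn = false` means Staller (the maximizer) moves next.  The game ends when no legal
move remains (for graphs without isolated vertices this means every vertex is totally
dominated). -/
noncomputable def gtVal (G : SimpleGraph V) (turn : Bool) (D : Finset V) : ℕ :=
  if h : (movesF G D).Nonempty then
    if turn then
      1 + ((movesF G D).attach.inf' (by simpa using h)
        fun v => gtVal G false (D ∪ nbr G v.1))
    else
      1 + ((movesF G D).attach.sup' (by simpa using h)
        fun v => gtVal G true (D ∪ nbr G v.1))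
  else 0
termination_by ((univ : Finset V) \ D).card
decreasing_by
  · exact movesF_card G D v.2
  · exact movesF_card G D v.2

/-- The game total domination number `γ_g^t(G|D)` (Dominator-start, `D` predominated). -/
noncomputable def gtD (G : SimpleGraph V) (D : Finset V := ∅) : ℕ := gtVal G true D

/-- The Staller-start game total domination number `γ_g^t'(G|D)`. -/
noncomputable def gtS (G : SimpleGraph V) (D : Finset V := ∅) : ℕ := gtVal G false D

/-- `G` has no isolated vertices. -/
def NoIsolated (G : SimpleGraph V) : Prop := ∀ v : V, ∃ w, G.Adj v w

lemma movesF_anti {G : SimpleGraph V} {D D' : Finset V} (h : D ⊆ D') :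
    movesF G D' ⊆ movesF G D := by
  intro s hs
  simp only [movesF, mem_filter, mem_univ, true_and] at *
  exact fun hsub => hs (hsub.trans h)

lemma gtVal_true_eq {G : SimpleGraph V} {D : Finset V} (h : (movesF G D).Nonempty) :
    gtVal G true D = 1 + ((movesF G D).attach.inf' (by simpa using h)
      fun v => gtVal G false (D ∪ nbr G v.1)) := by
  rw [gtVal, dif_pos h, if_pos rfl]

lemma gtVal_false_eq {G : SimpleGraph V} {D : Finset V} (h : (movesF G D).Nonempty) :
    gtVal G false D = 1 + ((movesF G D).attach.sup' (by simpa using h)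
      fun v => gtVal G true (D ∪ nbr G v.1)) := by
  rw [gtVal, dif_pos h, if_neg (by simp)]

lemma gtVal_eq_zero {G : SimpleGraph V} {D : Finset V} (h : ¬ (movesF G D).Nonempty)
    (t : Bool) : gtVal G t D = 0 := by
  rw [gtVal, dif_neg h]

lemma key (G : SimpleGraph V) (n : ℕ) :
    ∀ D : Finset V, ((univ : Finset V) \ D).card ≤ n →
      ∀ D' : Finset V, D ⊆ D' →
        (∀ t, gtVal G t D' ≤ gtVal G t D) ∧
        gtVal G true D' ≤ 1 + gtVal G false D ∧
        gtVal G false D' ≤ 1 + gtVal G true D := by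
  induction n using Nat.strong_induction_on with
  | _ n IH =>
    intro D hD D' hDD'
    have claimA : ∀ D'' : Finset V, D ⊆ D'' → ∀ t, gtVal G t D'' ≤ gtVal G t D := by
      intro D'' hsub t
      by_cases hne : (movesF G D).Nonempty
      · cases t with
        | true =>
          obtain ⟨⟨m, hm⟩, -, hmeq⟩ := Finset.exists_mem_eq_inf' (s := (movesF G D).attach)
            (by simpa using hne) (fun v => gtVal G false (D ∪ nbr G v.1))
          have hlt := movesF_card G D hm
          have hvalD : gtVal G true D = 1 + gtVal G false (D ∪ nbr G m) := by
            rw [gtVal_true_eq hne, hmeq]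
          by_cases hm' : m ∈ movesF G D''
          · have hne'' : (movesF G D'').Nonempty := ⟨m, hm'⟩
            rw [hvalD, gtVal_true_eq hne'']
            have h1 : (movesF G D'').attach.inf' (by simpa using hne'')
                (fun v => gtVal G false (D'' ∪ nbr G v.1)) ≤ gtVal G false (D'' ∪ nbr G m) :=
              Finset.inf'_le _ (Finset.mem_attach _ ⟨m, hm'⟩)
            have h2 := (IH _ (lt_of_lt_of_le hlt hD) (D ∪ nbr G m) le_rfl (D'' ∪ nbr G m)
              (Finset.union_subset_union hsub le_rfl)).1 false
            omega
          · have hnbr : nbr G m ⊆ D'' := by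
              by_contra hc
              exact hm' (by simp [movesF, hc])
            have h2 := (IH _ (lt_of_lt_of_le hlt hD) (D ∪ nbr G m) le_rfl D''
              (Finset.union_subset hsub hnbr)).2.1
            omega
        | false =>
          by_cases hne'' : (movesF G D'').Nonempty
          · rw [gtVal_false_eq hne'', gtVal_false_eq hne]
            have hsup : ∀ s ∈ (movesF G D'').attach, gtVal G true (D'' ∪ nbr G s.1)
                ≤ (movesF G D).attach.sup' (by simpa using hne)
                  (fun v => gtVal G true (D ∪ nbr G v.1)) := by
              intro s _
              have hsD : s.1 ∈ movesF G D := movesF_anti hsub s.2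
              have hlt := movesF_card G D hsD
              have h1 := (IH _ (lt_of_lt_of_le hlt hD) (D ∪ nbr G s.1) le_rfl
                (D'' ∪ nbr G s.1) (Finset.union_subset_union hsub le_rfl)).1 true
              exact h1.trans (Finset.le_sup'
                (fun v : {x // x ∈ movesF G D} => gtVal G true (D ∪ nbr G v.1))
                (Finset.mem_attach _ ⟨s.1, hsD⟩))
            have := Finset.sup'_le (by simpa using hne'') _ hsup
            omega
          · rw [gtVal_eq_zero hne'']
            exact Nat.zero_le _
      · have hne'' : ¬ (movesF G D'').Nonempty :=
          fun ⟨x, hx⟩ => hne ⟨x, movesF_anti hsub hx⟩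
        rw [gtVal_eq_zero hne'']
        exact Nat.zero_le _
    refine ⟨claimA _ hDD', ?_, ?_⟩
    · by_cases hne' : (movesF G D').Nonempty
      · obtain ⟨s, hs⟩ := hne'
        have hsD : s ∈ movesF G D := movesF_anti hDD' hs
        have hneD : (movesF G D).Nonempty := ⟨s, hsD⟩
        have hlt := movesF_card G D hsD
        rw [gtVal_true_eq ⟨s, hs⟩, gtVal_false_eq hneD]
        have h1 : (movesF G D').attach.inf' (by have hn : (movesF G D').Nonempty := ⟨s, hs⟩; simpa using hn)
            (fun v => gtVal G false (D' ∪ nbr G v.1)) ≤ gtVal G false (D' ∪ nbr G s) :=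
          Finset.inf'_le _ (Finset.mem_attach _ ⟨s, hs⟩)
        have h2 := (IH _ (lt_of_lt_of_le hlt hD) (D ∪ nbr G s) le_rfl (D' ∪ nbr G s)
          (Finset.union_subset_union hDD' le_rfl)).2.2
        have h3 : gtVal G true (D ∪ nbr G s) ≤ (movesF G D).attach.sup'
            (by simpa using hneD) (fun v => gtVal G true (D ∪ nbr G v.1)) :=
          Finset.le_sup' (fun v : {x // x ∈ movesF G D} => gtVal G true (D ∪ nbr G v.1))
            (Finset.mem_attach _ ⟨s, hsD⟩)
        omega
      · rw [gtVal_eq_zero hne']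
        exact Nat.zero_le _
    · by_cases hne' : (movesF G D').Nonempty
      · rw [gtVal_false_eq hne']
        have hsup : ∀ s ∈ (movesF G D').attach,
            gtVal G true (D' ∪ nbr G s.1) ≤ gtVal G true D := by
          intro s _
          exact claimA (D' ∪ nbr G s.1) (hDD'.trans Finset.subset_union_left) true
        have := Finset.sup'_le (by simpa using hne') _ hsup
        omega
      · rw [gtVal_eq_zero hne']
        exact Nat.zero_le _

/-- For every graph `G` (without isolated vertices) and every vertex `v`,
`γ_g^t(G|v) ≥ γ_g^t(G) − 2`. -/
theorem gtD_predominate_ge {V : Type*} [Fintype V] (G : SimpleGraph V)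
    (hG : NoIsolated G) (v : V) :
    gtD G ∅ - 2 ≤ gtD G {v} := by
  classical
  obtain ⟨w, hw⟩ := hG v
  have hv : v ∈ nbr G w := by simp only [nbr, mem_filter, mem_univ, true_and]; exact hw.symm
  have hwm : w ∈ movesF G (∅ : Finset V) := by
    simp only [movesF, mem_filter, mem_univ, true_and, Finset.subset_empty]
    exact fun h => by simp [h] at hv
  have hne : (movesF G (∅ : Finset V)).Nonempty := ⟨w, hwm⟩
  have h1 : gtVal G true ∅ ≤ 1 + gtVal G false (∅ ∪ nbr G w) := by
    rw [gtVal_true_eq hne]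
    have h0 : (movesF G (∅ : Finset V)).attach.inf' (by simpa using hne)
        (fun u => gtVal G false (∅ ∪ nbr G u.1)) ≤ gtVal G false (∅ ∪ nbr G w) :=
      Finset.inf'_le _ (Finset.mem_attach _ ⟨w, hwm⟩)
    omega
  have h2 : gtVal G false (∅ ∪ nbr G w) ≤ gtVal G false {v} :=
    (key G (((univ : Finset V) \ {v}).card) {v} le_rfl (∅ ∪ nbr G w)
      (by simp only [Finset.singleton_subset_iff, Finset.mem_union]; exact Or.inr hv)).1 false
  have h3 : gtVal G false {v} ≤ 1 + gtVal G true {v} :=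
    (key G (((univ : Finset V) \ {v}).card) {v} le_rfl {v} le_rfl).2.2
  unfold gtD
  omega
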